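/- For the cubic power A = g(L) of a lower triangular sub-Hermitian tensor L, the k-th slice matrix satisfies A^k = ∑_{s,t=1}^{k} l_{kst} L^s (L^t)^*, where L^s is the matrix (l_{irs})_{i,r} and (L^t)^* its conjugate transpose; in particular the sum ranges only over s,t ≤ k. -/

import Mathlib

/-- For the cubic power of a lower triangular sub-Hermitian tensor `L`, the
`k`-th slice satisfies `A^k = ∑_{s,t ≤ k} l_{kst} L^s (L^t)^*`: the sum ranges
only over `s, t ≤ k`. -/
theorem cubic_power_slice_formula
    (n : ℕ) (L : Fin n → Fin n → Fin n → ℂ)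
    (hlow : ∀ i j k, (i < j ∨ i < k) → L i j k = 0)
    (hsub : ∀ i j k, L i j k = star (L i k j)) :
    ∀ k i j : Fin n,
      ∑ r, ∑ s, ∑ t, L i r s * star (L j r t) * L k s t
        = ∑ s ∈ Finset.Iic k, ∑ t ∈ Finset.Iic k,
            L k s t * ∑ r, L i r s * star (L j r t) := by
  intro k i j
  have hfull : (∑ s ∈ Finset.Iic k, ∑ t ∈ Finset.Iic k,
      L k s t * ∑ r, L i r s * star (L j r t))
      = ∑ s, ∑ t, L k s t * ∑ r, L i r s * star (L j r t) := by
    rw [← Finset.sum_subset (Finset.subset_univ (Finset.Iic k))]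
    · refine Finset.sum_congr rfl fun s _ => ?_
      rw [← Finset.sum_subset (Finset.subset_univ (Finset.Iic k))]
      intro t _ ht
      rw [hlow k s t (Or.inr (by simpa using ht)), zero_mul]
    · intro s _ hs
      refine Finset.sum_eq_zero fun t _ => ?_
      rw [hlow k s t (Or.inl (by simpa using hs)), zero_mul]
  rw [hfull]
  rw [Finset.sum_comm]
  refine Finset.sum_congr rfl fun s _ => ?_
  rw [Finset.sum_comm]
  refine Finset.sum_congr rfl fun t _ => ?_
  rw [Finset.mul_sum]
  refine Finset.sum_congr rfl fun r _ => ?_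
  ring
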